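/- Let F(y) := |y| + ⟨b, y⟩ be a Minkowski–Randers metric on ℝ³ with constant vector b, |b| < 1, and let φ(s) := 1 + s so that F(y) = |y|·φ(⟨b,y⟩/|y|). The 2-harmonic symmetrization of F is F_sym(y) = |y|·φ_sym(⟨b,y⟩/|y|) with φ_sym(s) = (1−s²)/√(1+s²), and the quantity φ_sym(s) − s·φ_sym'(s) + (|b|²−s²)·φ_sym''(s) equals (1 − 3|b|² + (7+3|b|²)s²)/(1+s²)^(5/2); in particular it is positive for all |s| ≤ |b| if and only if |b| < 1/√3. -/

import Mathlib

open RealInnerProductSpace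

/-- The Minkowski–Randers metric `F(y) = |y| + ⟨b,y⟩` on `ℝ³`. -/
noncomputable def randersF (b y : EuclideanSpace ℝ (Fin 3)) : ℝ := ‖y‖ + ⟪b, y⟫

/-- The `2`-harmonic symmetrization of the Randers metric. -/
noncomputable def randersFsym (b y : EuclideanSpace ℝ (Fin 3)) : ℝ :=
  Real.sqrt (2 / ((randersF b y ^ 2)⁻¹ + (randersF b (-y) ^ 2)⁻¹))

/-- `φ_sym(s) = (1−s²)/√(1+s²)`, the symmetrization of `φ(s) = 1+s` for `m = 2`. -/
noncomputable def phiSym (s : ℝ) : ℝ := (1 - s ^ 2) / Real.sqrt (1 + s ^ 2)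

noncomputable def phi1 (s : ℝ) : ℝ := -s*(3+s^2)/((1+s^2)*Real.sqrt (1+s^2))
noncomputable def phi2 (s : ℝ) : ℝ := 3*(s^2-1)/((1+s^2)^2*Real.sqrt (1+s^2))

lemma hasDeriv_phiSym (s : ℝ) : HasDerivAt phiSym (phi1 s) s := by
  have hu : (0:ℝ) < 1 + s^2 := by positivity
  have htpos : 0 < Real.sqrt (1+s^2) := Real.sqrt_pos.2 hu
  have ht2 : Real.sqrt (1+s^2) ^ 2 = 1 + s^2 := Real.sq_sqrt hu.le
  have hinner : HasDerivAt (fun s:ℝ => 1 + s^2) (2*s) s := by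
    simpa using ((hasDerivAt_pow 2 s).const_add 1)
  have hnum : HasDerivAt (fun s:ℝ => 1 - s^2) (-(2*s)) s := by
    simpa using ((hasDerivAt_pow 2 s).const_sub 1)
  have hsq : HasDerivAt (fun s:ℝ => Real.sqrt (1+s^2)) (1/(2*Real.sqrt (1+s^2))*(2*s)) s :=
    (Real.hasDerivAt_sqrt hu.ne').comp s hinner
  have h := hnum.div hsq htpos.ne'
  refine h.congr_deriv ?_
  symm
  unfold phi1
  set t := Real.sqrt (1+s^2) with htdef
  field_simp
  linear_combination (s^3-s) * ht2

lemma hasDeriv_phi1 (s : ℝ) : HasDerivAt phi1 (phi2 s) s := by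
  have hu : (0:ℝ) < 1 + s^2 := by positivity
  have htpos : 0 < Real.sqrt (1+s^2) := Real.sqrt_pos.2 hu
  have ht2 : Real.sqrt (1+s^2) ^ 2 = 1 + s^2 := Real.sq_sqrt hu.le
  have hinner : HasDerivAt (fun s:ℝ => 1 + s^2) (2*s) s := by
    simpa using ((hasDerivAt_pow 2 s).const_add 1)
  have hsq : HasDerivAt (fun s:ℝ => Real.sqrt (1+s^2)) (1/(2*Real.sqrt (1+s^2))*(2*s)) s :=
    (Real.hasDerivAt_sqrt hu.ne').comp s hinner
  have hnum : HasDerivAt (fun s:ℝ => -s*(3+s^2)) ((-1)*(3+s^2) + (-s)*(2*s)) s := by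
    exact ((hasDerivAt_id s).neg.mul (by simpa using ((hasDerivAt_pow 2 s).const_add 3)))
  have hden : HasDerivAt (fun s:ℝ => (1+s^2)*Real.sqrt (1+s^2))
      (2*s*Real.sqrt (1+s^2) + (1+s^2)*(1/(2*Real.sqrt (1+s^2))*(2*s))) s := hinner.mul hsq
  have hdne : (1+s^2)*Real.sqrt (1+s^2) ≠ 0 := by positivity
  have h := hnum.div hden hdne
  refine h.congr_deriv ?_
  symm
  unfold phi2
  set t := Real.sqrt (1+s^2) with htdef
  field_simp
  linear_combination (3*s^2+s^4) * ht2

lemma deriv_phiSym_eq : deriv phiSym = phi1 := funext fun s => (hasDeriv_phiSym s).deriv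

lemma deriv2_phiSym_eq : deriv (deriv phiSym) = phi2 := by
  rw [deriv_phiSym_eq]; exact funext fun s => (hasDeriv_phi1 s).deriv

lemma key (B s : ℝ) : phiSym s - s * phi1 s + (B - s^2) * phi2 s
    = (1 - 3*B + (7+3*B)*s^2)/(1+s^2)^((5:ℝ)/2) := by
  have hu : (0:ℝ) < 1 + s^2 := by positivity
  have htpos : 0 < Real.sqrt (1+s^2) := Real.sqrt_pos.2 hu
  have ht2 : Real.sqrt (1+s^2) ^ 2 = 1 + s^2 := Real.sq_sqrt hu.le
  have hr : (1+s^2:ℝ)^((5:ℝ)/2) = (1+s^2)^2 * Real.sqrt (1+s^2) := by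
    rw [Real.sqrt_eq_rpow, ← Real.rpow_natCast (1+s^2) 2, ← Real.rpow_add hu]; norm_num
  unfold phiSym phi1 phi2
  rw [hr]
  set t := Real.sqrt (1+s^2) with htdef
  field_simp
  ring

/-- For the Minkowski–Randers metric `F(y) = |y| + ⟨b,y⟩` on `ℝ³` with `|b| < 1`:
its `2`-harmonic symmetrization is `F_sym(y) = |y|·φ_sym(⟨b,y⟩/|y|)` with
`φ_sym(s) = (1−s²)/√(1+s²)`; the Chern–Shen ellipticity quantity equals
`(1 − 3|b|² + (7+3|b|²)s²)/(1+s²)^(5/2)`; and it is positive for all `|s| ≤ |b|`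
if and only if `|b| < 1/√3`. -/
theorem randers_symmetrization (b : EuclideanSpace ℝ (Fin 3)) (hb : ‖b‖ < 1) :
    (∀ y : EuclideanSpace ℝ (Fin 3), y ≠ 0 →
      randersFsym b y = ‖y‖ * phiSym (⟪b, y⟫ / ‖y‖)) ∧
    (∀ s : ℝ,
      phiSym s - s * deriv phiSym s + (‖b‖ ^ 2 - s ^ 2) * deriv (deriv phiSym) s =
        (1 - 3 * ‖b‖ ^ 2 + (7 + 3 * ‖b‖ ^ 2) * s ^ 2) / (1 + s ^ 2) ^ ((5 : ℝ) / 2)) ∧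
    ((∀ s : ℝ, |s| ≤ ‖b‖ →
        0 < phiSym s - s * deriv phiSym s + (‖b‖ ^ 2 - s ^ 2) * deriv (deriv phiSym) s) ↔
      ‖b‖ < 1 / Real.sqrt 3) := by
  have hkey : ∀ s : ℝ,
      phiSym s - s * deriv phiSym s + (‖b‖ ^ 2 - s ^ 2) * deriv (deriv phiSym) s =
        (1 - 3 * ‖b‖ ^ 2 + (7 + 3 * ‖b‖ ^ 2) * s ^ 2) / (1 + s ^ 2) ^ ((5 : ℝ) / 2) := by
    intro s
    rw [deriv2_phiSym_eq, deriv_phiSym_eq]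
    exact key (‖b‖^2) s
  refine ⟨?_, hkey, ?_⟩
  · intro y hy
    set r := ‖y‖ with hr
    set p := (⟪b, y⟫ : ℝ) with hp
    have hrpos : 0 < r := norm_pos_iff.2 hy
    have habs : |p| < r := by
      have h1 : |p| ≤ ‖b‖ * r := abs_real_inner_le_norm b y
      nlinarith [norm_nonneg b]
    have hp1 : 0 < r + p := by cases abs_lt.1 habs; linarith
    have hp2 : 0 < r - p := by cases abs_lt.1 habs; linarith
    have hsum : 0 < r^2 + p^2 := by positivity
    have hsub : 0 < r^2 - p^2 := by nlinarith [abs_lt.1 habs, sq_abs p]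
    have hF1 : randersF b y = r + p := by simp [randersF, hr, hp]
    have hF2 : randersF b (-y) = r - p := by
      simp [randersF, hr, hp, inner_neg_right]
      ring
    have hA : 2 / (((r+p) ^ 2)⁻¹ + ((r-p) ^ 2)⁻¹) = (r^2-p^2)^2/(r^2+p^2) := by
      field_simp
      ring
    have hsq : Real.sqrt ((r^2-p^2)^2/(r^2+p^2)) = (r^2-p^2)/Real.sqrt (r^2+p^2) := by
      rw [Real.sqrt_div (by positivity), Real.sqrt_sq hsub.le]
    have hL : randersFsym b y = (r^2-p^2)/Real.sqrt (r^2+p^2) := by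
      rw [randersFsym, hF1, hF2, hA, hsq]
    rw [hL, phiSym]
    have h1 : 1 + (p/r)^2 = (r^2+p^2)/r^2 := by field_simp
    have h2 : Real.sqrt ((r^2+p^2)/r^2) = Real.sqrt (r^2+p^2)/r := by
      rw [Real.sqrt_div hsum.le, Real.sqrt_sq hrpos.le]
    rw [h1, h2]
    have hs2 : Real.sqrt (r^2+p^2) ≠ 0 := by positivity
    field_simp
  · constructor
    · intro h
      have h0 := h 0 (by simp)
      rw [hkey 0] at h0
      simp [Real.one_rpow] at h0
      have h3 : (0:ℝ) < Real.sqrt 3 := Real.sqrt_pos.2 (by norm_num)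
      have hs3 : Real.sqrt 3 ^ 2 = 3 := Real.sq_sqrt (by norm_num)
      rw [lt_div_iff₀ h3]
      have hx : ‖b‖^2*3 = (‖b‖*Real.sqrt 3)^2 := by rw [mul_pow, hs3]
      nlinarith [norm_nonneg b, mul_nonneg (norm_nonneg b) h3.le]
    · intro h s _
      have h3 : (0:ℝ) < Real.sqrt 3 := Real.sqrt_pos.2 (by norm_num)
      have hs3 : Real.sqrt 3 ^ 2 = 3 := Real.sq_sqrt (by norm_num)
      rw [lt_div_iff₀ h3] at h
      have hx : ‖b‖^2*3 = (‖b‖*Real.sqrt 3)^2 := by rw [mul_pow, hs3]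
      have hnum : 0 < 1 - 3 * ‖b‖ ^ 2 + (7 + 3 * ‖b‖ ^ 2) * s ^ 2 := by
        nlinarith [norm_nonneg b, sq_nonneg s, mul_nonneg (norm_nonneg b) h3.le, hx, h]
      rw [hkey s]
      exact div_pos hnum (Real.rpow_pos_of_pos (by positivity) _)
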